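/- Let K be a number field of degree n over ℚ with ring of integers O_K, and let O_{K,n} = {α ∈ O_K : [ℚ(α):ℚ] = n} be the set of algebraic integers of K of degree n. Then Int(O_{K,n}, O_K) = Int(O_K); that is, every polynomial h ∈ K[X] with h(O_{K,n}) ⊆ O_K satisfies h(O_K) ⊆ O_K (O_{K,n} is polynomially dense in O_K). -/

import Mathlib

open Polynomial IntermediateField

private lemma natDegree_delta_lt {K : Type*} [Field K] (g : K[X]) (hg : 0 < g.natDegree) :
    (g.comp (X + C 1) - g).natDegree < g.natDegree := by
  have hg0 : g ≠ 0 := fun h => by simp [h] at hg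
  have hq : (X + C (1:K)).natDegree = 1 := natDegree_X_add_C 1
  have hnc : (g.comp (X + C 1)).natDegree = g.natDegree := by
    rw [natDegree_comp, hq, mul_one]
  have hc0 : g.comp (X + C 1) ≠ 0 := fun h => by rw [h, natDegree_zero] at hnc; omega
  by_cases h0 : g.comp (X + C 1) - g = 0
  · rw [h0, natDegree_zero]; exact hg
  have hd : (g.comp (X + C 1)).degree = g.degree := by
    rw [degree_eq_natDegree hc0, degree_eq_natDegree hg0, hnc]
  have hlc : (g.comp (X + C 1)).leadingCoeff = g.leadingCoeff := by
    rw [leadingCoeff_comp (by rw [hq]; omega), leadingCoeff_X_add_C, one_pow, mul_one]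
  have := degree_sub_lt hd hc0 hlc
  rw [hd] at this
  exact natDegree_lt_natDegree h0 this

private lemma eval_int_integral {K : Type*} [Field K] [Algebra ℚ K] :
    ∀ d : ℕ, ∀ g : K[X], g.natDegree = d → ∀ M : ℤ,
      (∀ m : ℤ, M ≤ m → IsIntegral ℤ (g.eval (m : K))) →
      ∀ m : ℤ, IsIntegral ℤ (g.eval (m : K)) := by
  intro d
  induction d using Nat.strong_induction_on with
  | _ d IH =>
    intro g hgd M hM m
    rcases Nat.eq_zero_or_pos d with h0 | hpos
    · subst h0
      obtain ⟨a, ha⟩ := natDegree_eq_zero.mp hgd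
      subst ha
      simpa using hM M le_rfl
    · set Δ : K[X] := g.comp (X + C 1) - g with hΔ
      have hevalΔ : ∀ x : K, Δ.eval x = g.eval (x + 1) - g.eval x := by
        intro x; simp [hΔ]
      have hΔlt : Δ.natDegree < d := hgd ▸ natDegree_delta_lt g (hgd ▸ hpos)
      have hΔall : ∀ k : ℤ, IsIntegral ℤ (Δ.eval (k : K)) := by
        refine IH Δ.natDegree hΔlt Δ rfl M (fun k hk => ?_)
        rw [hevalΔ]
        have h1 : ((k : K) + 1) = ((k + 1 : ℤ) : K) := by push_cast; ring
        rw [h1]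
        exact (hM (k+1) (by omega)).sub (hM k hk)
      have key : ∀ t : ℕ, IsIntegral ℤ (g.eval ((M - t : ℤ) : K)) := by
        intro t
        induction t with
        | zero => simpa using hM M le_rfl
        | succ t ih =>
          have hcast : (M - ((t+1:ℕ):ℤ)) = M - ((t:ℤ)+1) := by push_cast; ring
          have hx : (((M - (t:ℤ)) : ℤ) : K) = (((M - ((t:ℤ)+1)) : ℤ) : K) + 1 := by
            push_cast; ring
          have h2 : g.eval (((M - ((t:ℤ)+1)) : ℤ) : K)
              = g.eval (((M - (t:ℤ)) : ℤ) : K) - Δ.eval (((M - ((t:ℤ)+1)) : ℤ) : K) := by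
            rw [hevalΔ, hx]; ring
          rw [hcast, h2]
          exact ih.sub (hΔall _)
      rcases le_total M m with h | h
      · exact hM m h
      · have : m = M - ((M - m).toNat : ℤ) := by omega
        rw [this]; exact key _



/-- Let `K` be a number field of degree `n` over `ℚ` with ring of integers
`O_K`, and let `O_{K,n} = {α ∈ O_K : [ℚ(α):ℚ] = n}` be the set of algebraic integers of `K`
of degree `n`. Then `Int(O_{K,n}, O_K) = Int(O_K)`: every polynomial `h ∈ K[X]` mapping
`O_{K,n}` into `O_K` maps all of `O_K` into `O_K`, i.e. `O_{K,n}` is polynomially dense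
in `O_K`.  Here membership in `O_K` is expressed as being integral over `ℤ`, and the degree
of `α` is the degree of its minimal polynomial over `ℚ`. -/
theorem stmt_0 (K : Type*) [Field K] [NumberField K] (n : ℕ)
    (hn : Module.finrank ℚ K = n) :
    {h : Polynomial K | ∀ α : K, IsIntegral ℤ α → (minpoly ℚ α).natDegree = n →
        IsIntegral ℤ (h.eval α)} =
      {h : Polynomial K | ∀ α : K, IsIntegral ℤ α → IsIntegral ℤ (h.eval α)} := by
  ext h
  simp only [Set.mem_setOf_eq]
  constructor
  · intro H α hα
    -- a primitive element, scaled to be integral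
    obtain ⟨θ₀, hθ₀⟩ := Field.exists_primitive_element ℚ K
    have hinj : ∀ x : ℤ, algebraMap ℤ K x = 0 → x = 0 := by
      intro x hx
      rw [eq_intCast] at hx
      exact_mod_cast hx
    have halgZ : Algebra.IsAlgebraic ℤ K :=
      IsFractionRing.comap_isAlgebraic_iff (K := ℚ).mpr (inferInstanceAs (Algebra.IsAlgebraic ℚ K))
    obtain ⟨y, hy, hxy⟩ :=
      (Algebra.IsAlgebraic.isAlgebraic (R := ℤ) θ₀).exists_integral_multiple
    set θ : K := algebraMap ℤ K y * θ₀ with hθdef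
    have hθint : IsIntegral ℤ θ := by rw [hθdef, ← Algebra.smul_def]; exact hxy
    have hyK : ((y : ℚ) : K) ≠ 0 := by
      rw [Rat.cast_intCast]
      exact_mod_cast hy
    have hθtop : ℚ⟮θ⟯ = ⊤ := by
      rw [eq_top_iff, ← hθ₀, IntermediateField.adjoin_simple_le_iff]
      have hmem : θ ∈ ℚ⟮θ⟯ := IntermediateField.mem_adjoin_simple_self ℚ θ
      have : ((y:ℚ)⁻¹ : ℚ) • θ = θ₀ := by
        rw [Rat.smul_def, hθdef, eq_intCast, Rat.cast_inv, Rat.cast_intCast,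
          inv_mul_cancel_left₀]
        exact_mod_cast hy
      rw [← this]
      exact ℚ⟮θ⟯.smul_mem hmem
    -- degree criterion
    have hdeg : ∀ β : K, ℚ⟮β⟯ = ⊤ → (minpoly ℚ β).natDegree = n := by
      intro β htop
      have hβℚ : IsIntegral ℚ β := IsIntegral.of_finite ℚ β
      have hfr := IntermediateField.adjoin.finrank hβℚ
      rw [htop, IntermediateField.finrank_top', hn] at hfr
      exact hfr.symm
    -- the bad set is finite
    have hfinIF : Finite (IntermediateField ℚ K) :=
      Field.finite_intermediateField_of_exists_primitive_element ℚ K ⟨θ₀, hθ₀⟩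
    set B : Set ℤ := {m : ℤ | ℚ⟮α + (m : K) * θ⟯ ≠ ⊤} with hB
    have hBinj : Set.InjOn (fun m : ℤ => ℚ⟮α + (m : K) * θ⟯) B := by
      intro a ha b hb hab
      by_contra hne
      have hab' : ℚ⟮α + (a:K)*θ⟯ = ℚ⟮α + (b:K)*θ⟯ := hab
      have h1 : α + (a:K)*θ ∈ ℚ⟮α + (a:K)*θ⟯ := IntermediateField.mem_adjoin_simple_self ℚ _
      have h2 : α + (b:K)*θ ∈ ℚ⟮α + (a:K)*θ⟯ := by
        rw [hab']; exact IntermediateField.mem_adjoin_simple_self ℚ _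
      have h3 : ((a:K) - (b:K)) * θ ∈ ℚ⟮α + (a:K)*θ⟯ := by
        have := sub_mem h1 h2
        convert this using 1
        ring
      have habK : ((a - b : ℚ) : K) ≠ 0 := by
        rw [Rat.cast_sub, Rat.cast_intCast, Rat.cast_intCast]
        intro hz
        apply hne
        have : (a:K) = (b:K) := by linear_combination hz
        exact_mod_cast this
      have hθmem : θ ∈ ℚ⟮α + (a:K)*θ⟯ := by
        have h4 := ℚ⟮α + (a:K)*θ⟯.smul_mem h3 (x := ((a : ℚ) - (b : ℚ))⁻¹)
        have h5 : (((a : ℚ) - (b : ℚ))⁻¹ : ℚ) • (((a:K) - (b:K)) * θ) = θ := by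
          rw [Rat.smul_def]
          push_cast
          have hne2 : ((a:K) - (b:K)) ≠ 0 := by
            intro hz
            apply hne
            have : (a:K) = (b:K) := by linear_combination hz
            exact_mod_cast this
          field_simp
        rwa [h5] at h4
      exact ha (eq_top_iff.mpr (hθtop ▸ IntermediateField.adjoin_simple_le_iff.mpr hθmem))
    have hBfin : B.Finite := Set.Finite.of_finite_image (Set.toFinite _) hBinj
    obtain ⟨M0, hM0⟩ := hBfin.bddAbove
    set g : K[X] := h.comp (C α + C θ * X) with hgdef
    have hgev : ∀ x : K, g.eval x = h.eval (α + θ * x) := by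
      intro x; simp [hgdef]
    have hall : ∀ m : ℤ, M0 + 1 ≤ m → IsIntegral ℤ (g.eval (m : K)) := by
      intro m hm
      have hmB : m ∉ B := fun hmem => by have := hM0 hmem; omega
      rw [hB, Set.mem_setOf_eq, not_not] at hmB
      have hmint : IsIntegral ℤ ((m : ℤ) : K) := by
        have := isIntegral_algebraMap (R := ℤ) (A := K) (x := m)
        rwa [eq_intCast] at this
      have hint : IsIntegral ℤ (α + (m : K) * θ) := hα.add (hmint.mul hθint)
      have hres := H _ hint (hdeg _ hmB)
      rw [hgev, mul_comm θ ((m : ℤ) : K)]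
      exact hres
    have hfin0 := eval_int_integral g.natDegree g rfl (M0 + 1) hall 0
    have h00 : ((0 : ℤ) : K) = 0 := by norm_num
    rw [h00, hgev 0] at hfin0
    simpa using hfin0
  · intro H α hα _
    exact H α hα
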